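/- Let f, g : ℝ^p × ℝ^d → ℝ be differentiable, λ > 0, and suppose Φ := f + λ·g has L_Φ-Lipschitz gradient (L_Φ > 0) and is bounded below by Φ* ∈ ℝ. Fix 0 < α ≤ 1/L_Φ and constants L ≥ 0, L_g > 0, δ ≥ 0. Define iterates θ^{t+1} = θ^t − α·∇Φ(θ^t) with θ^t = (W^t, x^t). Suppose for every t = 0, 1, …, T−1 there exist x_t^* with ∇_x g(W^t, x_t^*) = 0 and z^t ∈ ℝ^d with ‖∇_W g(W^t, z^t)‖² ≤ δ, satisfying 4·λ²·‖∇_W g(W^t, x_t^*) − ∇_W g(W^t, z^t)‖² ≤ (1/(2α²))·‖θ^{t+1} − θ^t‖² + 2·L²·L_g²/(α²·(t+1)²). Then (1/T)·Σ_{t=0}^{T−1} ‖∇f(θ^t) + λ·(∇g(θ^t) − ∇g(W^t, x_t^*))‖² ≤ 5·(Φ(θ^0) − Φ*)/(α·T) + 4·L²·L_g²/(α²·T) + 4·λ²·δ. -/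

import Mathlib

open RealInnerProductSpace
set_option linter.unusedSectionVars false
set_option maxHeartbeats 1000000


/-- The point `(W, x)` of the product Hilbert space `ℝ^p × ℝ^d` (with the ℓ² product
norm `‖(u,v)‖² = ‖u‖² + ‖v‖²`). -/
noncomputable def pairL2 {E F : Type*} [NormedAddCommGroup E] [NormedAddCommGroup F]
    (a : E) (b : F) : WithLp 2 (E × F) := (WithLp.equiv 2 (E × F)).symm (a, b)

section helpers
variable {E F : Type*} [NormedAddCommGroup E] [InnerProductSpace ℝ E] [CompleteSpace E]
  [NormedAddCommGroup F] [InnerProductSpace ℝ F] [CompleteSpace F]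

lemma aux_inner_gradient {H : Type*} [NormedAddCommGroup H] [InnerProductSpace ℝ H]
    [CompleteSpace H] (h : H → ℝ) (x v : H) : ⟪gradient h x, v⟫ = fderiv ℝ h x v := by
  rw [gradient, ← InnerProductSpace.toDual_apply_apply, LinearIsometryEquiv.apply_symm_apply]

lemma pairL2_add (a a' : E) (b b' : F) : pairL2 a b + pairL2 a' b' = pairL2 (a + a') (b + b') := rfl

lemma pairL2_norm_sq (a : E) (b : F) : ‖pairL2 a b‖ ^ 2 = ‖a‖ ^ 2 + ‖b‖ ^ 2 := by
  simpa [pairL2] using WithLp.prod_norm_sq_eq_of_L2 ((WithLp.equiv 2 (E × F)).symm (a, b))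

lemma pairL2_inner (a a' : E) (b b' : F) :
    ⟪pairL2 a b, pairL2 a' b'⟫ = ⟪a, a'⟫ + ⟪b, b'⟫ := by
  simpa [pairL2] using WithLp.prod_inner_apply ((WithLp.equiv 2 (E × F)).symm (a, b))
    ((WithLp.equiv 2 (E × F)).symm (a', b'))

noncomputable def iota1 : E →L[ℝ] WithLp 2 (E × F) :=
  ((WithLp.prodContinuousLinearEquiv 2 ℝ E F).symm : (E × F) →L[ℝ] WithLp 2 (E × F)).comp
    (ContinuousLinearMap.inl ℝ E F)

noncomputable def iota2 : F →L[ℝ] WithLp 2 (E × F) :=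
  ((WithLp.prodContinuousLinearEquiv 2 ℝ E F).symm : (E × F) →L[ℝ] WithLp 2 (E × F)).comp
    (ContinuousLinearMap.inr ℝ E F)

lemma iota1_apply (u : E) : (iota1 u : WithLp 2 (E × F)) = pairL2 u 0 := rfl
lemma iota2_apply (w : F) : (iota2 w : WithLp 2 (E × F)) = pairL2 0 w := rfl

lemma fderiv_partial1 (g : WithLp 2 (E × F) → ℝ) (hg : Differentiable ℝ g) (a : E) (b : F) :
    fderiv ℝ (fun w => g (pairL2 w b)) a = (fderiv ℝ g (pairL2 a b)).comp iota1 := by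
  have h1 : HasFDerivAt (fun w : E => pairL2 w b) (iota1 : E →L[ℝ] WithLp 2 (E × F)) a := by
    have h := (iota1 : E →L[ℝ] WithLp 2 (E × F)).hasFDerivAt (x := a) |>.add_const
      (pairL2 (0 : E) b)
    have he : (fun w : E => iota1 w + pairL2 (0:E) b) = fun w : E => pairL2 w b := by
      funext w; rw [iota1_apply, pairL2_add, add_zero, zero_add]
    rwa [he] at h
  exact ((hg _).hasFDerivAt.comp a h1).fderiv

lemma fderiv_partial2 (g : WithLp 2 (E × F) → ℝ) (hg : Differentiable ℝ g) (a : E) (b : F) :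
    fderiv ℝ (fun y => g (pairL2 a y)) b = (fderiv ℝ g (pairL2 a b)).comp iota2 := by
  have h1 : HasFDerivAt (fun y : F => pairL2 a y) (iota2 : F →L[ℝ] WithLp 2 (E × F)) b := by
    have h := (iota2 : F →L[ℝ] WithLp 2 (E × F)).hasFDerivAt (x := b) |>.add_const
      (pairL2 a (0 : F))
    have he : (fun y : F => iota2 y + pairL2 a (0:F)) = fun y : F => pairL2 a y := by
      funext y; rw [iota2_apply, pairL2_add, add_zero, zero_add]
    rwa [he] at h
  exact ((hg _).hasFDerivAt.comp b h1).fderiv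

lemma grad_split (g : WithLp 2 (E × F) → ℝ) (hg : Differentiable ℝ g) (a : E) (b : F) :
    gradient g (pairL2 a b) =
      pairL2 (gradient (fun w => g (pairL2 w b)) a) (gradient (fun y => g (pairL2 a y)) b) := by
  apply ext_inner_right ℝ
  intro v
  have hv : v = pairL2 (WithLp.equiv 2 (E × F) v).1 (WithLp.equiv 2 (E × F) v).2 := rfl
  set u := (WithLp.equiv 2 (E × F) v).1
  set w := (WithLp.equiv 2 (E × F) v).2
  rw [hv, pairL2_inner, aux_inner_gradient, aux_inner_gradient, aux_inner_gradient,
    fderiv_partial1 g hg a b, fderiv_partial2 g hg a b]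
  have hsplit : pairL2 u w = pairL2 u 0 + pairL2 (0 : E) w := by
    rw [pairL2_add, add_zero, zero_add]
  rw [hsplit, map_add]
  rfl

end helpers

section hilbert
variable {H : Type*} [NormedAddCommGroup H] [InnerProductSpace ℝ H] [CompleteSpace H]

lemma gradient_add_smul (f g : H → ℝ) (hf : Differentiable ℝ f) (hg : Differentiable ℝ g)
    (lam : ℝ) (x : H) :
    gradient (fun θ => f θ + lam * g θ) x = gradient f x + lam • gradient g x := by
  have h : HasFDerivAt (fun θ => f θ + lam * g θ)
      (fderiv ℝ f x + lam • fderiv ℝ g x) x :=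
    (hf x).hasFDerivAt.add ((hg x).hasFDerivAt.const_mul lam)
  rw [h.hasGradientAt.gradient, map_add, map_smul]
  rfl

lemma descent_lemma (Φ : H → ℝ) (hΦ : Differentiable ℝ Φ) (C : ℝ)
    (hLip : ∀ a b, ‖gradient Φ a - gradient Φ b‖ ≤ C * ‖a - b‖) (x y : H) :
    Φ y ≤ Φ x + ⟪gradient Φ x, y - x⟫ + C / 2 * ‖y - x‖ ^ 2 := by
  set v := y - x with hv
  have hφd : ∀ s : ℝ, HasDerivAt (fun s : ℝ => Φ (x + s • v)) ⟪gradient Φ (x + s • v), v⟫ s := by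
    intro s
    have hline : HasDerivAt (fun s : ℝ => x + s • v) v s := by
      simpa using ((hasDerivAt_id s).smul_const v).const_add x
    have h2 := (hΦ (x + s • v)).hasGradientAt.hasFDerivAt.comp_hasDerivAt s hline
    simpa [InnerProductSpace.toDual_apply_apply, Function.comp_def] using h2
  set ψ : ℝ → ℝ := fun s => Φ (x + s • v) - s * ⟪gradient Φ x, v⟫ - C * ‖v‖ ^ 2 / 2 * s ^ 2
    with hψ
  have hψd : ∀ s : ℝ, HasDerivAt ψ
      (⟪gradient Φ (x + s • v), v⟫ - ⟪gradient Φ x, v⟫ - C * ‖v‖ ^ 2 * s) s := by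
    intro s
    have h1 : HasDerivAt (fun s : ℝ => s * ⟪gradient Φ x, v⟫) ⟪gradient Φ x, v⟫ s := by
      simpa using hasDerivAt_mul_const (x := s) (⟪gradient Φ x, v⟫)
    have h2 : HasDerivAt (fun s : ℝ => C * ‖v‖ ^ 2 / 2 * s ^ 2) (C * ‖v‖ ^ 2 * s) s := by
      have := (hasDerivAt_pow 2 s).const_mul (C * ‖v‖ ^ 2 / 2)
      refine this.congr_deriv ?_
      push_cast; ring
    exact ((hφd s).sub h1).sub h2
  have hanti : AntitoneOn ψ (Set.Icc 0 1) := by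
    apply antitoneOn_of_deriv_nonpos (convex_Icc 0 1)
    · exact fun s _ => ((hψd s).continuousAt).continuousWithinAt
    · exact fun s _ => ((hψd s).differentiableAt).differentiableWithinAt
    · intro s hs
      rw [interior_Icc] at hs
      rw [(hψd s).deriv]
      have hsub : ⟪gradient Φ (x + s • v), v⟫ - ⟪gradient Φ x, v⟫
          = ⟪gradient Φ (x + s • v) - gradient Φ x, v⟫ := (inner_sub_left _ _ _).symm
      have hcs : ⟪gradient Φ (x + s • v) - gradient Φ x, v⟫
          ≤ ‖gradient Φ (x + s • v) - gradient Φ x‖ * ‖v‖ := real_inner_le_norm _ _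
      have hlip2 : ‖gradient Φ (x + s • v) - gradient Φ x‖ ≤ C * (s * ‖v‖) := by
        have := hLip (x + s • v) x
        simpa [norm_smul, abs_of_pos hs.1, mul_assoc] using this
      have hv0 : (0:ℝ) ≤ ‖v‖ := norm_nonneg v
      nlinarith [hs.1.le]
  have h01 : ψ 1 ≤ ψ 0 := hanti (by norm_num) (by norm_num) (by norm_num)
  have e1 : x + (1:ℝ) • v = y := by rw [one_smul, hv]; abel
  have e0 : x + (0:ℝ) • v = x := by rw [zero_smul, add_zero]
  rw [hψ] at h01
  simp only [e1, e0] at h01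
  norm_num at h01
  have := aux_inner_gradient Φ x v
  linarith

/-- Telescoped bound on the sum of gradient norms along gradient descent. -/
lemma descent_sum (Φ : H → ℝ) (hΦ : Differentiable ℝ Φ) (LΦ : ℝ) (hLΦ : 0 < LΦ)
    (hLip : ∀ a b, ‖gradient Φ a - gradient Φ b‖ ≤ LΦ * ‖a - b‖)
    (Φstar : ℝ) (hbdd : ∀ θ, Φstar ≤ Φ θ)
    (α : ℝ) (hα0 : 0 < α) (hα1 : α ≤ 1 / LΦ)
    (θ : ℕ → H) (hupd : ∀ t, θ (t + 1) = θ t - α • gradient Φ (θ t)) (T : ℕ) :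
    ∑ t ∈ Finset.range T, ‖gradient Φ (θ t)‖ ^ 2 ≤ 2 / α * (Φ (θ 0) - Φstar) := by
  have hαL : α * LΦ ≤ 1 := by
    rw [← le_div_iff₀ hLΦ]; exact hα1
  have hstep : ∀ t, θ (t + 1) - θ t = -(α • gradient Φ (θ t)) := by
    intro t; rw [hupd t]; abel
  have hstepnorm : ∀ t, ‖θ (t + 1) - θ t‖ ^ 2 = α ^ 2 * ‖gradient Φ (θ t)‖ ^ 2 := by
    intro t
    rw [hstep t, norm_neg, norm_smul, mul_pow, Real.norm_eq_abs, sq_abs]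
  have hdesc : ∀ t, ‖gradient Φ (θ t)‖ ^ 2 ≤ 2 / α * (Φ (θ t) - Φ (θ (t + 1))) := by
    intro t
    have h := descent_lemma Φ hΦ LΦ hLip (θ t) (θ (t + 1))
    have hin : ⟪gradient Φ (θ t), θ (t + 1) - θ t⟫ = -(α * ‖gradient Φ (θ t)‖ ^ 2) := by
      rw [hstep t, inner_neg_right, real_inner_smul_right, real_inner_self_eq_norm_sq]
    rw [hin, hstepnorm t] at h
    rw [div_mul_eq_mul_div, le_div_iff₀ hα0]
    nlinarith [sq_nonneg ‖gradient Φ (θ t)‖,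
      mul_nonneg (mul_nonneg hα0.le (sub_nonneg.mpr hαL)) (sq_nonneg ‖gradient Φ (θ t)‖)]
  calc ∑ t ∈ Finset.range T, ‖gradient Φ (θ t)‖ ^ 2
      ≤ ∑ t ∈ Finset.range T, 2 / α * (Φ (θ t) - Φ (θ (t + 1))) :=
        Finset.sum_le_sum fun t _ => hdesc t
    _ = 2 / α * (Φ (θ 0) - Φ (θ T)) := by
        rw [← Finset.mul_sum, Finset.sum_range_sub' (fun t => Φ (θ t))]
    _ ≤ 2 / α * (Φ (θ 0) - Φstar) := by
        apply mul_le_mul_of_nonneg_left _ (by positivity)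
        linarith [hbdd (θ T)]

lemma sum_inv_sq_le (T : ℕ) :
    ∑ t ∈ Finset.range T, (1:ℝ) / ((t:ℝ) + 1) ^ 2 ≤ 2 := by
  have key : ∀ T : ℕ, ∑ t ∈ Finset.range T, (1:ℝ) / ((t:ℝ) + 1) ^ 2 ≤ 2 - 2 / ((T:ℝ) + 1) := by
    intro T
    induction T with
    | zero => norm_num
    | succ n ih =>
      rw [Finset.sum_range_succ]
      push_cast
      have hn : (0:ℝ) < (n:ℝ) + 1 := by positivity
      have hn2 : (0:ℝ) < (n:ℝ) + 2 := by positivity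
      have key : 1 / ((n:ℝ) + 1) ^ 2 ≤ 2 / ((n:ℝ) + 1) - 2 / ((n:ℝ) + 2) := by
        rw [div_sub_div _ _ (ne_of_gt hn) (ne_of_gt hn2),
          div_le_div_iff₀ (by positivity) (by positivity)]
        nlinarith
      have h2 : 2 / ((n:ℝ) + 1 + 1) = 2 / ((n:ℝ) + 2) := by ring_nf
      rw [h2]
      linarith
  have h := key T
  have : (0:ℝ) ≤ 2 / ((T:ℝ) + 1) := by positivity
  linarith

end hilbert
/-- Convergence of the single-loop LDC-MTL iteration: with `Φ = f + λg`
lower bounded with `L_Φ`-Lipschitz gradient, step `0 < α ≤ 1/L_Φ`, iterates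
`θ^{t+1} = θᵗ − α∇Φ(θᵗ)`, stationary points `x_t^*` of `g(Wᵗ, ·)`, approximations `zᵗ`
with `‖∇_W g(Wᵗ, zᵗ)‖² ≤ δ`, and the per-step correction-error bound, one gets
`(1/T) Σ_{t<T} ‖∇f(θᵗ) + λ(∇g(θᵗ) − ∇g(Wᵗ, x_t^*))‖²
  ≤ 5(Φ(θ⁰) − Φ*)/(αT) + 4L²L_g²/(α²T) + 4λ²δ`. -/
theorem single_loop_ldc_mtl_convergence (p d : ℕ)
    (f g : WithLp 2 (EuclideanSpace ℝ (Fin p) × EuclideanSpace ℝ (Fin d)) → ℝ)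
    (hf : Differentiable ℝ f) (hg : Differentiable ℝ g)
    (lam : ℝ) (hlam : 0 < lam)
    (Φ : WithLp 2 (EuclideanSpace ℝ (Fin p) × EuclideanSpace ℝ (Fin d)) → ℝ)
    (hΦdef : ∀ θ, Φ θ = f θ + lam * g θ)
    (LΦ : ℝ) (hLΦ : 0 < LΦ)
    (hLip : ∀ θ θ', ‖gradient Φ θ - gradient Φ θ'‖ ≤ LΦ * ‖θ - θ'‖)
    (Φstar : ℝ) (hbdd : ∀ θ, Φstar ≤ Φ θ)
    (α : ℝ) (hα0 : 0 < α) (hα1 : α ≤ 1 / LΦ)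
    (L : ℝ) (hL : 0 ≤ L) (Lg : ℝ) (hLg : 0 < Lg) (δ : ℝ) (hδ : 0 ≤ δ)
    (W : ℕ → EuclideanSpace ℝ (Fin p)) (X : ℕ → EuclideanSpace ℝ (Fin d))
    (hupd : ∀ t, pairL2 (W (t + 1)) (X (t + 1)) =
        pairL2 (W t) (X t) - α • gradient Φ (pairL2 (W t) (X t)))
    (T : ℕ) (hT : 1 ≤ T)
    (xstar : ℕ → EuclideanSpace ℝ (Fin d)) (z : ℕ → EuclideanSpace ℝ (Fin d))
    (hstat : ∀ t < T, gradient (fun y => g (pairL2 (W t) y)) (xstar t) = 0)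
    (hz : ∀ t < T, ‖gradient (fun W' => g (pairL2 W' (z t))) (W t)‖ ^ 2 ≤ δ)
    (hcorr : ∀ t < T, 4 * lam ^ 2 *
          ‖gradient (fun W' => g (pairL2 W' (xstar t))) (W t) -
            gradient (fun W' => g (pairL2 W' (z t))) (W t)‖ ^ 2 ≤
        (1 / (2 * α ^ 2)) * ‖pairL2 (W (t + 1)) (X (t + 1)) - pairL2 (W t) (X t)‖ ^ 2 +
          2 * L ^ 2 * Lg ^ 2 / (α ^ 2 * ((t : ℝ) + 1) ^ 2)) :
    (1 / (T : ℝ)) * ∑ t ∈ Finset.range T,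
        ‖gradient f (pairL2 (W t) (X t)) +
          lam • (gradient g (pairL2 (W t) (X t)) -
            gradient g (pairL2 (W t) (xstar t)))‖ ^ 2
      ≤ 5 * (Φ (pairL2 (W 0) (X 0)) - Φstar) / (α * T)
        + 4 * L ^ 2 * Lg ^ 2 / (α ^ 2 * T) + 4 * lam ^ 2 * δ := by
  have hΦfun : Φ = fun θ' => f θ' + lam * g θ' := funext hΦdef
  have hΦdiff : Differentiable ℝ Φ := by rw [hΦfun]; exact hf.add (hg.const_mul lam)
  have hTpos : (0:ℝ) < (T:ℝ) := by exact_mod_cast Nat.lt_of_lt_of_le Nat.zero_lt_one hT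
  have hαne : α ≠ 0 := ne_of_gt hα0
  have hTne : (T:ℝ) ≠ 0 := ne_of_gt hTpos
  have hsum : ∑ t ∈ Finset.range T, ‖gradient Φ (pairL2 (W t) (X t))‖ ^ 2 ≤
      2 / α * (Φ (pairL2 (W 0) (X 0)) - Φstar) :=
    descent_sum Φ hΦdiff LΦ hLΦ hLip Φstar hbdd α hα0 hα1
      (fun t => pairL2 (W t) (X t)) hupd T
  have key : ∀ t < T,
      ‖gradient f (pairL2 (W t) (X t)) +
          lam • (gradient g (pairL2 (W t) (X t)) -
            gradient g (pairL2 (W t) (xstar t)))‖ ^ 2 ≤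
        5 / 2 * ‖gradient Φ (pairL2 (W t) (X t))‖ ^ 2 +
          (2 * L ^ 2 * Lg ^ 2 / α ^ 2) * (1 / ((t:ℝ) + 1) ^ 2) + 4 * lam ^ 2 * δ := by
    intro t ht
    have hc := hcorr t ht
    have hz' := hz t ht
    set gW := gradient (fun w => g (pairL2 w (xstar t))) (W t) with hgW
    set gz := gradient (fun w => g (pairL2 w (z t))) (W t) with hgz
    have hgsplit : gradient g (pairL2 (W t) (xstar t)) =
        pairL2 gW (0 : EuclideanSpace ℝ (Fin d)) := by
      rw [grad_split g hg (W t) (xstar t), hstat t ht, hgW]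
    have hvt : gradient Φ (pairL2 (W t) (X t)) =
        gradient f (pairL2 (W t) (X t)) + lam • gradient g (pairL2 (W t) (X t)) := by
      rw [hΦfun]; exact gradient_add_smul f g hf hg lam _
    have hGid : gradient f (pairL2 (W t) (X t)) +
          lam • (gradient g (pairL2 (W t) (X t)) - gradient g (pairL2 (W t) (xstar t)))
        = gradient Φ (pairL2 (W t) (X t)) - lam • pairL2 gW (0 : EuclideanSpace ℝ (Fin d)) := by
      rw [hvt, hgsplit, smul_sub]; abel
    have hPnorm : ‖lam • pairL2 gW (0 : EuclideanSpace ℝ (Fin d))‖ ^ 2 = lam ^ 2 * ‖gW‖ ^ 2 := by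
      rw [norm_smul, mul_pow, Real.norm_eq_abs, sq_abs, pairL2_norm_sq]
      simp
    have h1 : ‖gradient Φ (pairL2 (W t) (X t)) -
          lam • pairL2 gW (0 : EuclideanSpace ℝ (Fin d))‖ ^ 2 ≤
        2 * ‖gradient Φ (pairL2 (W t) (X t))‖ ^ 2 + 2 * lam ^ 2 * ‖gW‖ ^ 2 := by
      have htr := norm_sub_le (gradient Φ (pairL2 (W t) (X t)))
        (lam • pairL2 gW (0 : EuclideanSpace ℝ (Fin d)))
      nlinarith [norm_nonneg (gradient Φ (pairL2 (W t) (X t)) -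
          lam • pairL2 gW (0 : EuclideanSpace ℝ (Fin d))),
        norm_nonneg (gradient Φ (pairL2 (W t) (X t))),
        norm_nonneg (lam • pairL2 gW (0 : EuclideanSpace ℝ (Fin d))),
        sq_nonneg (‖gradient Φ (pairL2 (W t) (X t))‖ -
          ‖lam • pairL2 gW (0 : EuclideanSpace ℝ (Fin d))‖), hPnorm]
    have hsq : ‖gW‖ ^ 2 ≤ 2 * ‖gW - gz‖ ^ 2 + 2 * ‖gz‖ ^ 2 := by
      have htr : ‖gW‖ ≤ ‖gW - gz‖ + ‖gz‖ := by
        calc ‖gW‖ = ‖(gW - gz) + gz‖ := by rw [sub_add_cancel]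
          _ ≤ ‖gW - gz‖ + ‖gz‖ := norm_add_le _ _
      nlinarith [sq_nonneg (‖gW - gz‖ - ‖gz‖), norm_nonneg gW, norm_nonneg (gW - gz),
        norm_nonneg gz]
    have h2 : 2 * lam ^ 2 * ‖gW‖ ^ 2 ≤ 4 * lam ^ 2 * ‖gW - gz‖ ^ 2 + 4 * lam ^ 2 * ‖gz‖ ^ 2 := by
      nlinarith [hsq, sq_nonneg lam]
    have hstep : pairL2 (W (t + 1)) (X (t + 1)) - pairL2 (W t) (X t) =
        -(α • gradient Φ (pairL2 (W t) (X t))) := by rw [hupd t]; abel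
    have hstepnorm : ‖pairL2 (W (t + 1)) (X (t + 1)) - pairL2 (W t) (X t)‖ ^ 2 =
        α ^ 2 * ‖gradient Φ (pairL2 (W t) (X t))‖ ^ 2 := by
      rw [hstep, norm_neg, norm_smul, mul_pow, Real.norm_eq_abs, sq_abs]
    rw [hstepnorm] at hc
    have e1 : 1 / (2 * α ^ 2) * (α ^ 2 * ‖gradient Φ (pairL2 (W t) (X t))‖ ^ 2) =
        1 / 2 * ‖gradient Φ (pairL2 (W t) (X t))‖ ^ 2 := by
      field_simp
    have e2 : 2 * L ^ 2 * Lg ^ 2 / (α ^ 2 * ((t:ℝ) + 1) ^ 2) =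
        (2 * L ^ 2 * Lg ^ 2 / α ^ 2) * (1 / ((t:ℝ) + 1) ^ 2) := by
      have ht1 : ((t:ℝ) + 1) ≠ 0 := by positivity
      field_simp
    rw [e1, e2] at hc
    have h4 : 4 * lam ^ 2 * ‖gz‖ ^ 2 ≤ 4 * lam ^ 2 * δ := by nlinarith [hz', sq_nonneg lam]
    rw [hGid]
    linarith [h1, h2, hc, h4]
  have hsumG : ∑ t ∈ Finset.range T,
      ‖gradient f (pairL2 (W t) (X t)) +
          lam • (gradient g (pairL2 (W t) (X t)) -
            gradient g (pairL2 (W t) (xstar t)))‖ ^ 2 ≤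
      5 / 2 * (2 / α * (Φ (pairL2 (W 0) (X 0)) - Φstar)) +
        (2 * L ^ 2 * Lg ^ 2 / α ^ 2) * 2 + (T:ℝ) * (4 * lam ^ 2 * δ) := by
    calc ∑ t ∈ Finset.range T,
        ‖gradient f (pairL2 (W t) (X t)) +
          lam • (gradient g (pairL2 (W t) (X t)) -
            gradient g (pairL2 (W t) (xstar t)))‖ ^ 2
        ≤ ∑ t ∈ Finset.range T,
          (5 / 2 * ‖gradient Φ (pairL2 (W t) (X t))‖ ^ 2 +
            (2 * L ^ 2 * Lg ^ 2 / α ^ 2) * (1 / ((t:ℝ) + 1) ^ 2) + 4 * lam ^ 2 * δ) :=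
          Finset.sum_le_sum fun t ht' => key t (Finset.mem_range.mp ht')
      _ = 5 / 2 * ∑ t ∈ Finset.range T, ‖gradient Φ (pairL2 (W t) (X t))‖ ^ 2 +
            (2 * L ^ 2 * Lg ^ 2 / α ^ 2) * ∑ t ∈ Finset.range T, (1 / ((t:ℝ) + 1) ^ 2) +
            (T:ℝ) * (4 * lam ^ 2 * δ) := by
          rw [Finset.sum_add_distrib, Finset.sum_add_distrib, ← Finset.mul_sum,
            ← Finset.mul_sum, Finset.sum_const, Finset.card_range, nsmul_eq_mul]
      _ ≤ 5 / 2 * (2 / α * (Φ (pairL2 (W 0) (X 0)) - Φstar)) +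
            (2 * L ^ 2 * Lg ^ 2 / α ^ 2) * 2 + (T:ℝ) * (4 * lam ^ 2 * δ) := by
          have hB := sum_inv_sq_le T
          have c1 : (0:ℝ) ≤ 5 / 2 := by norm_num
          have c2 : (0:ℝ) ≤ 2 * L ^ 2 * Lg ^ 2 / α ^ 2 := by positivity
          have := mul_le_mul_of_nonneg_left hsum c1
          have := mul_le_mul_of_nonneg_left hB c2
          linarith
  have hfin : 5 / 2 * (2 / α * (Φ (pairL2 (W 0) (X 0)) - Φstar)) +
        (2 * L ^ 2 * Lg ^ 2 / α ^ 2) * 2 + (T:ℝ) * (4 * lam ^ 2 * δ)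
      = 5 * (Φ (pairL2 (W 0) (X 0)) - Φstar) / α + 4 * L ^ 2 * Lg ^ 2 / α ^ 2 +
        (T:ℝ) * (4 * lam ^ 2 * δ) := by ring
  rw [hfin] at hsumG
  have hmul := mul_le_mul_of_nonneg_left hsumG
    (by positivity : (0:ℝ) ≤ 1 / (T:ℝ))
  have heq : 1 / (T:ℝ) * (5 * (Φ (pairL2 (W 0) (X 0)) - Φstar) / α +
        4 * L ^ 2 * Lg ^ 2 / α ^ 2 + (T:ℝ) * (4 * lam ^ 2 * δ))
      = 5 * (Φ (pairL2 (W 0) (X 0)) - Φstar) / (α * (T:ℝ)) +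
        4 * L ^ 2 * Lg ^ 2 / (α ^ 2 * (T:ℝ)) + 4 * lam ^ 2 * δ := by
    field_simp
  rw [heq] at hmul
  exact hmul
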